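/- Let R be a ring, I an ideal, and e, f idempotents in R with eR ≅ fR as right R-modules, witnessed by a ∈ eRf, b ∈ fRe with ab = e and ba = f. If every unit of the corner ring ē R̄ ē lifts to a unit of eRe, then every right-module isomorphism ē R̄ → f̄ R̄ lifts to a right-module isomorphism eR → fR. Concretely: for every x ∈ f̄ R̄ ē and y ∈ ē R̄ f̄ with xy = f̄ and yx = ē, there exist u ∈ eRf and v ∈ fRe with uv = e, vu = f, and v̄ = x. -/
import Mathlib


/-- Let `π : R → S` be a surjective ring homomorphism (the quotient map
`R → R/I`), and `e, f` idempotents of `R` with `eR ≅ fR`, witnessed by `a ∈ eRf`,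
`b ∈ fRe` with `ab = e`, `ba = f`. If every unit of the corner `(π e) S (π e)` lifts to a
unit of `eRe`, then every right-module isomorphism `(π e)S → (π f)S` lifts to an
isomorphism `eR → fR`. -/
theorem stmt_12 {R S : Type*} [Ring R] [Ring S] (π : R →+* S)
    (hsurj : Function.Surjective π)
    (e f : R) (he : IsIdempotentElem e) (hf : IsIdempotentElem f)
    (a b : R) (ha : e * a * f = a) (hb : f * b * e = b)
    (hab : a * b = e) (hba : b * a = f)
    (hcorner : ∀ w : S, π e * w * π e = w →
      (∃ w' : S, π e * w' * π e = w' ∧ w * w' = π e ∧ w' * w = π e) →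
      ∃ v : R, e * v * e = v ∧ (∃ v' : R, e * v' * e = v' ∧ v * v' = e ∧ v' * v = e) ∧
        π v = w) :
    ∀ x y : S, π f * x * π e = x → π e * y * π f = y → x * y = π f → y * x = π e →
      ∃ u v : R, e * u * f = u ∧ f * v * e = v ∧ u * v = e ∧ v * u = f ∧ π v = x := by
  intro x y hx hy hxy hyx
  have hfx : π f * x = x := by
    conv_lhs => rw [← hx]
    rw [← mul_assoc, ← mul_assoc, ← map_mul, hf, hx]
  have hxe : x * π e = x := by conv_lhs => rw [← hfx, hx]
  have hyf : y * π f = y := by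
    conv_lhs => rw [← hy]
    rw [mul_assoc, mul_assoc, ← map_mul, hf, ← mul_assoc, hy]
  have hey : π e * y = y := by conv_lhs => rw [← hyf, ← mul_assoc, hy]
  have hea : e * a = a := by conv_lhs => rw [← ha, ← mul_assoc, ← mul_assoc, he, ha]
  have haf : a * f = a := by conv_lhs => rw [← ha, mul_assoc, mul_assoc, hf, ← mul_assoc, ha]
  have hfb : f * b = b := by conv_lhs => rw [← hb, ← mul_assoc, ← mul_assoc, hf, hb]
  have hbe : b * e = b := by conv_lhs => rw [← hb, mul_assoc, mul_assoc, he, ← mul_assoc, hb]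
  obtain ⟨v₀, hv₀, ⟨v₀', hv₀', hvv', hv'v⟩, hπv₀⟩ := hcorner (π a * x)
    (by rw [← mul_assoc, ← map_mul, hea, mul_assoc, hxe])
    ⟨y * π b, by rw [← mul_assoc (π e), hey, mul_assoc, ← map_mul, hbe],
      by rw [mul_assoc, ← mul_assoc x, hxy, ← map_mul, hfb, ← map_mul, hab],
      by rw [mul_assoc, ← mul_assoc (π b), ← map_mul, hba, ← mul_assoc, hyf, hyx]⟩
  have hev₀ : e * v₀ = v₀ := by conv_lhs => rw [← hv₀, ← mul_assoc, ← mul_assoc, he, hv₀]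
  have hv₀e : v₀ * e = v₀ := by conv_lhs => rw [← hv₀, mul_assoc, mul_assoc, he, ← mul_assoc, hv₀]
  have hev₀' : e * v₀' = v₀' := by conv_lhs => rw [← hv₀', ← mul_assoc, ← mul_assoc, he, hv₀']
  refine ⟨v₀' * a, b * v₀, ?_, ?_, ?_, ?_, ?_⟩
  · rw [mul_assoc, mul_assoc, haf, ← mul_assoc, hev₀']
  · rw [← mul_assoc, hfb, mul_assoc, hv₀e]
  · rw [mul_assoc, ← mul_assoc a, hab, hev₀, hv'v]
  · rw [mul_assoc, ← mul_assoc v₀, hvv', hea, hba]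
  · rw [map_mul, hπv₀, ← mul_assoc, ← map_mul, hba, hfx]
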